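/- arXiv:1307.1652 — 5 statements merged into one kernel-verified Lean document; each statement's English description precedes it below -/
import Mathlib

section
/- Let R be a commutative ring with identity and let P be a finite subset of R. Let P_0, P_1, ..., P_r be subsets of P such that (i) the union of P_0, ..., P_r is P; (ii) P_0 has exactly one element; (iii) whenever p and p' are distinct elements of P_i (for 0 < i ≤ r), there exists an index i' with 0 ≤ i' < i and an element of P_{i'} that divides the product p·p'. For each i set q_i = Σ_{p ∈ P_i} p^{e(p)}, where the e(p) ≥ 1 are arbitrary positive integers. Then the radical of the ideal of R generated by P equals the radical of the ideal generated by q_0, q_1, ..., q_r. -/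
/-- **Schmitt–Vogel lemma.**  Let `R` be a commutative ring with identity and `P` a finite
subset of `R`.  Let `P₀, …, P_r` be subsets of `P` such that (i) their union is `P`,
(ii) `P₀` has exactly one element, and (iii) whenever `p ≠ p'` are elements of `Pᵢ`
(`0 < i ≤ r`), there is an `i' < i` and an element of `P_{i'}` dividing `p * p'`.
Set `qᵢ = ∑_{p ∈ Pᵢ} p ^ e p` with arbitrary exponents `e p ≥ 1`.  Then the radical of the
ideal generated by `P` equals the radical of the ideal generated by `q₀, …, q_r`. -/
theorem schmitt_vogel {R : Type*} [CommRing R] (P : Finset R) (r : ℕ)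
    (Psub : Fin (r + 1) → Finset R)
    (hsub : ∀ i, Psub i ⊆ P)
    (hunion : (⋃ i, (Psub i : Set R)) = (P : Set R))
    (hcard : (Psub 0).card = 1)
    (hdiv : ∀ i : Fin (r + 1), 0 < i → ∀ p ∈ Psub i, ∀ p' ∈ Psub i, p ≠ p' →
      ∃ i' : Fin (r + 1), i' < i ∧ ∃ a ∈ Psub i', a ∣ p * p')
    (e : R → ℕ) (he : ∀ p ∈ P, 1 ≤ e p)
    (q : Fin (r + 1) → R) (hq : ∀ i, q i = ∑ p ∈ Psub i, p ^ e p) :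
    (Ideal.span (P : Set R)).radical = (Ideal.span (Set.range q)).radical := by
  classical
  set J := Ideal.span (Set.range q) with hJ
  have hqJ : ∀ i, q i ∈ J := fun i => Ideal.subset_span ⟨i, rfl⟩
  -- key claim: every p in some Psub i lies in the radical of J
  have key : ∀ n : ℕ, ∀ i : Fin (r + 1), (i : ℕ) ≤ n → ∀ p ∈ Psub i, p ∈ J.radical := by
    intro n
    induction n with
    | zero =>
      intro i hi p hp
      have hi0 : i = 0 := Fin.ext (Nat.le_zero.mp hi)
      subst hi0
      obtain ⟨p0, h0⟩ := Finset.card_eq_one.mp hcard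
      rw [h0, Finset.mem_singleton] at hp
      subst hp
      have hq0 : q 0 = p ^ e p := by rw [hq 0, h0, Finset.sum_singleton]
      have hpow : p ^ e p ∈ J := hq0 ▸ hqJ 0
      exact ⟨e p, hpow⟩
    | succ n ih =>
      intro i hi p hp
      by_cases hle : (i : ℕ) ≤ n
      · exact ih i hle p hp
      · have hipos : 0 < i := by
          rw [Fin.lt_def, Fin.val_zero]
          omega
        -- for each p' ≠ p in Psub i, p * p' ∈ radical J
        have hpp' : ∀ p' ∈ (Psub i).erase p, p * p' ∈ J.radical := by
          intro p' hp'
          obtain ⟨hne, hp'mem⟩ := Finset.mem_erase.mp hp'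
          obtain ⟨i', hi'lt, a, haP, c, hc⟩ := hdiv i hipos p hp p' hp'mem (Ne.symm hne)
          have hi'le : (i' : ℕ) ≤ n := by
            have := Fin.lt_def.mp hi'lt
            omega
          have ha : a ∈ J.radical := ih i' hi'le a haP
          rw [hc]
          exact Ideal.mul_mem_right _ _ ha
        set N := (Psub i).sup e with hN
        have hsum : ∑ p' ∈ (Psub i).erase p, p ^ N * p' ^ e p' ∈ J.radical := by
          refine Ideal.sum_mem _ fun p' hp' => ?_
          have hp'mem : p' ∈ Psub i := Finset.mem_of_mem_erase hp'
          have hle' : e p' ≤ N := Finset.le_sup hp'mem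
          have : p ^ N * p' ^ e p' = p ^ (N - e p') * (p * p') ^ e p' := by
            rw [mul_pow, ← mul_assoc, ← pow_add, Nat.sub_add_cancel hle']
          rw [this]
          exact Ideal.mul_mem_left _ _
            (Ideal.pow_mem_of_mem _ (hpp' p' hp') _ (he p' (hsub i hp'mem)))
        have hqi : p ^ N * q i = p ^ (N + e p) + ∑ p' ∈ (Psub i).erase p, p ^ N * p' ^ e p' := by
          rw [hq i, ← Finset.add_sum_erase _ _ hp, mul_add, Finset.mul_sum, ← pow_add]
        have hbig : p ^ (N + e p) ∈ J.radical := by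
          have h1 : p ^ N * q i ∈ J.radical :=
            Ideal.mul_mem_left _ _ (Ideal.le_radical (hqJ i))
          have : p ^ (N + e p) = p ^ N * q i - ∑ p' ∈ (Psub i).erase p, p ^ N * p' ^ e p' := by
            rw [hqi]; ring
          rw [this]
          exact Ideal.sub_mem _ h1 hsum
        have : p ∈ J.radical.radical := ⟨N + e p, hbig⟩
        rwa [Ideal.radical_idem] at this
  -- easy inclusion: J ≤ span P
  have h1 : J ≤ Ideal.span (P : Set R) := by
    rw [hJ, Ideal.span_le]
    rintro _ ⟨i, rfl⟩
    rw [hq i]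
    refine Ideal.sum_mem _ fun p hp => ?_
    exact Ideal.pow_mem_of_mem _ (Ideal.subset_span (by exact_mod_cast hsub i hp)) _
      (he p (hsub i hp))
  refine le_antisymm ?_ (Ideal.radical_mono h1)
  rw [← Ideal.radical_idem J]
  refine Ideal.radical_mono ?_
  rw [Ideal.span_le]
  intro p hp
  have : p ∈ ⋃ i, (Psub i : Set R) := by rw [hunion]; exact_mod_cast hp
  obtain ⟨_, ⟨i, rfl⟩, hpi⟩ := this
  exact key r i (Nat.lt_succ_iff.mp i.isLt) p hpi
end

section
/- Let n ≥ 6 and let S_n be the n-sunlet graph, with edge ideal I(S_n) in R = K[x_1,...,x_n,y_1,...,y_n] over a field K. Define the polynomials q_0 = x_1 x_2; q_1 = x_1 x_n + x_2 x_3; q_i = x_i y_i + x_{i+1} x_{i+2} for i = 2,...,n−4; q_{n−3} = x_1 y_1 + x_{n−1} x_n; q_{n−2} = x_{n−3} y_{n−3} + x_{n−2} x_{n−1} + x_{n−2} y_{n−2} x_n y_n; and q_{n−1} = x_{n−2} y_{n−2} + x_{n−1} y_{n−1} + x_n y_n. Then I(S_n) equals the radical of the ideal (q_0, q_1, ...,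 q_{n−1}). -/
open MvPolynomial
open Fin.NatCast

section Helpers

variable {R : Type*} [CommRing R]

private lemma sunlet_rad_pair {S : Ideal R} {a b : R}
    (hab : a + b ∈ S.radical) (h : a * b ∈ S.radical) :
    a ∈ S.radical ∧ b ∈ S.radical := by
  have ha : a ∈ S.radical := by
    apply Ideal.mem_radical_of_pow_mem (m := 2)
    have e : a ^ 2 = a * (a + b) - a * b := by ring
    rw [e]
    exact Ideal.sub_mem _ (Ideal.mul_mem_left _ a hab) h
  exact ⟨ha, by have := Ideal.sub_mem _ hab ha; simpa using this⟩

private lemma sunlet_rad_triple {S : Ideal R} {a b c : R}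
    (habc : a + b + c ∈ S.radical) (hab : a * b ∈ S.radical)
    (hac : a * c ∈ S.radical) (hbc : b * c ∈ S.radical) :
    a ∈ S.radical ∧ b ∈ S.radical ∧ c ∈ S.radical := by
  have ha : a ∈ S.radical := by
    apply Ideal.mem_radical_of_pow_mem (m := 2)
    have e : a ^ 2 = a * (a + b + c) - a * b - a * c := by ring
    rw [e]
    exact Ideal.sub_mem _ (Ideal.sub_mem _ (Ideal.mul_mem_left _ a habc) hab) hac
  have hb : b ∈ S.radical := by
    apply Ideal.mem_radical_of_pow_mem (m := 2)
    have e : b ^ 2 = b * (a + b + c) - a * b - b * c := by ring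
    rw [e]
    exact Ideal.sub_mem _ (Ideal.sub_mem _ (Ideal.mul_mem_left _ b habc) hab) hbc
  refine ⟨ha, hb, ?_⟩
  have e : c = a + b + c - a - b := by ring
  rw [e]
  exact Ideal.sub_mem _ (Ideal.sub_mem _ habc ha) hb

private lemma sunlet_single_add_single_le {σ : Type*} {u v : σ} (huv : u ≠ v)
    {m : σ →₀ ℕ} :
    Finsupp.single u 1 + Finsupp.single v 1 ≤ m ↔ 1 ≤ m u ∧ 1 ≤ m v := by
  constructor
  · intro h
    refine ⟨le_trans ?_ (h u), le_trans ?_ (h v)⟩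
    · simp [Finsupp.single_apply, huv.symm]
    · simp [Finsupp.single_apply, huv]
  · rintro ⟨h1, h2⟩ s
    rcases eq_or_ne s u with rfl | hu
    · simpa [Finsupp.single_apply, huv.symm] using h1
    · rcases eq_or_ne s v with rfl | hv
      · simpa [Finsupp.single_apply, huv, hu] using h2
      · simp [Finsupp.single_apply, (Ne.symm hu), (Ne.symm hv)]

private lemma sunlet_X_mul_X {K : Type*} [Field K] {σ : Type*} (u v : σ) :
    (X u * X v : MvPolynomial σ K) = monomial (Finsupp.single u 1 + Finsupp.single v 1) 1 := by
  rw [X, X, monomial_mul, one_mul]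

end Helpers

/-- Let `n ≥ 6` and let `S_n` be the `n`-sunlet graph (the cycle `x_1 x_2, …, x_{n-1} x_n,
x_n x_1` together with the whiskers `x_i y_i`).  With the polynomials
`q_0 = x_1 x_2`, `q_1 = x_1 x_n + x_2 x_3`, `q_i = x_i y_i + x_{i+1} x_{i+2}`
for `i = 2, …, n-4`, `q_{n-3} = x_1 y_1 + x_{n-1} x_n`,
`q_{n-2} = x_{n-3} y_{n-3} + x_{n-2} x_{n-1} + x_{n-2} y_{n-2} x_n y_n` and
`q_{n-1} = x_{n-2} y_{n-2} + x_{n-1} y_{n-1} + x_n y_n`, the edge ideal `I(S_n)` equals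
the radical of `(q_0, …, q_{n-1})`.  (Here the `1`-based label `j` corresponds to the
variable indexed by `(j - 1 : Fin n)`, so indices are read cyclically.) -/
theorem sunlet_eq_radical_span {K : Type*} [Field K] (n : ℕ) [NeZero n] (hn : 6 ≤ n)
    (x y : ℕ → MvPolynomial (Fin n ⊕ Fin n) K)
    (hx : ∀ j, x j = X (Sum.inl ((j - 1 : ℕ) : Fin n)))
    (hy : ∀ j, y j = X (Sum.inr ((j - 1 : ℕ) : Fin n)))
    (I : Ideal (MvPolynomial (Fin n ⊕ Fin n) K))
    (hI : I = Ideal.span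
      ({p | ∃ j ∈ Finset.Icc 1 n, p = x j * x (j + 1)} ∪
       {p | ∃ j ∈ Finset.Icc 1 n, p = x j * y j}))
    (q : ℕ → MvPolynomial (Fin n ⊕ Fin n) K)
    (hq0 : q 0 = x 1 * x 2)
    (hq1 : q 1 = x 1 * x n + x 2 * x 3)
    (hqi : ∀ i, 2 ≤ i → i ≤ n - 4 → q i = x i * y i + x (i + 1) * x (i + 2))
    (hqn3 : q (n - 3) = x 1 * y 1 + x (n - 1) * x n)
    (hqn2 : q (n - 2) = x (n - 3) * y (n - 3) + x (n - 2) * x (n - 1)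
      + x (n - 2) * y (n - 2) * x n * y n)
    (hqn1 : q (n - 1) = x (n - 2) * y (n - 2) + x (n - 1) * y (n - 1) + x n * y n) :
    I = (Ideal.span (q '' Set.Iio n)).radical := by
  set J : Ideal (MvPolynomial (Fin n ⊕ Fin n) K) := Ideal.span (q '' Set.Iio n) with hJ
  -- basic index arithmetic
  have e32 : n - 3 + 1 = n - 2 := by omega
  have e21 : n - 2 + 1 = n - 1 := by omega
  have e10 : n - 1 + 1 = n := by omega
  have hxn1 : x (n + 1) = x 1 := by
    rw [hx, hx]
    congr 2
    simp [Fin.natCast_self]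
  -- membership of generators in the radical
  have hqmem : ∀ i, i < n → q i ∈ J.radical := fun i hi =>
    Ideal.le_radical (Ideal.subset_span ⟨i, hi, rfl⟩)
  have h0 : x 1 * x 2 ∈ J.radical := hq0 ▸ hqmem 0 (by omega)
  have h1 := sunlet_rad_pair (hq1 ▸ hqmem 1 (by omega)) (by
    have e : (x 1 * x n) * (x 2 * x 3) = (x 1 * x 2) * (x n * x 3) := by ring
    rw [e]; exact Ideal.mul_mem_right _ _ h0)
  obtain ⟨h1n, h23⟩ := h1
  have step : ∀ i, 2 ≤ i → i ≤ n - 4 → x i * x (i + 1) ∈ J.radical →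
      x i * y i ∈ J.radical ∧ x (i + 1) * x (i + 2) ∈ J.radical := by
    intro i h2 h4 hmem
    refine sunlet_rad_pair ((hqi i h2 h4) ▸ hqmem i (by omega)) ?_
    have e : (x i * y i) * (x (i + 1) * x (i + 2)) = (x i * x (i + 1)) * (y i * x (i + 2)) := by
      ring
    rw [e]; exact Ideal.mul_mem_right _ _ hmem
  have chain : ∀ i, 2 ≤ i → i ≤ n - 3 → x i * x (i + 1) ∈ J.radical := by
    intro i h2
    induction i, h2 using Nat.le_induction with
    | base => intro _; exact h23
    | succ i hi ih =>
      intro hle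
      exact (step i hi (by omega) (ih (by omega))).2
  have whisk : ∀ i, 2 ≤ i → i ≤ n - 4 → x i * y i ∈ J.radical := fun i h2 h4 =>
    (step i h2 h4 (chain i h2 (by omega))).1
  have h32 : x (n - 3) * x (n - 2) ∈ J.radical := by
    have := chain (n - 3) (by omega) le_rfl; rwa [e32] at this
  have hs3 := sunlet_rad_pair (hqn3 ▸ hqmem (n - 3) (by omega)) (by
    have e : (x 1 * y 1) * (x (n - 1) * x n) = (x 1 * x n) * (y 1 * x (n - 1)) := by ring
    rw [e]; exact Ideal.mul_mem_right _ _ h1n)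
  obtain ⟨h1y, hn1n⟩ := hs3
  have hs2 := sunlet_rad_triple (hqn2 ▸ hqmem (n - 2) (by omega))
    (by
      have e : (x (n - 3) * y (n - 3)) * (x (n - 2) * x (n - 1))
          = (x (n - 3) * x (n - 2)) * (y (n - 3) * x (n - 1)) := by ring
      rw [e]; exact Ideal.mul_mem_right _ _ h32)
    (by
      have e : (x (n - 3) * y (n - 3)) * (x (n - 2) * y (n - 2) * x n * y n)
          = (x (n - 3) * x (n - 2)) * (y (n - 3) * y (n - 2) * x n * y n) := by ring
      rw [e]; exact Ideal.mul_mem_right _ _ h32)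
    (by
      have e : (x (n - 2) * x (n - 1)) * (x (n - 2) * y (n - 2) * x n * y n)
          = (x (n - 1) * x n) * (x (n - 2) * x (n - 2) * y (n - 2) * y n) := by ring
      rw [e]; exact Ideal.mul_mem_right _ _ hn1n)
  obtain ⟨h3y, h21, hC⟩ := hs2
  have hs1 := sunlet_rad_triple (hqn1 ▸ hqmem (n - 1) (by omega))
    (by
      have e : (x (n - 2) * y (n - 2)) * (x (n - 1) * y (n - 1))
          = (x (n - 2) * x (n - 1)) * (y (n - 2) * y (n - 1)) := by ring
      rw [e]; exact Ideal.mul_mem_right _ _ h21)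
    (by
      have e : (x (n - 2) * y (n - 2)) * (x n * y n)
          = x (n - 2) * y (n - 2) * x n * y n := by ring
      rw [e]; exact hC)
    (by
      have e : (x (n - 1) * y (n - 1)) * (x n * y n)
          = (x (n - 1) * x n) * (y (n - 1) * y n) := by ring
      rw [e]; exact Ideal.mul_mem_right _ _ hn1n)
  obtain ⟨h2y, h1y', hny⟩ := hs1
  -- all edge monomials lie in the radical
  have edgeT : ∀ j, 1 ≤ j → j ≤ n → x j * x (j + 1) ∈ J.radical := by
    intro j hj1 hjn
    rcases (show j = 1 ∨ (2 ≤ j ∧ j ≤ n - 3) ∨ j = n - 2 ∨ j = n - 1 ∨ j = n by omega) with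
      rfl | ⟨ha, hb⟩ | rfl | rfl | rfl
    · exact h0
    · exact chain j ha hb
    · rw [e21]; exact h21
    · rw [e10]; exact hn1n
    · rw [hxn1, mul_comm]; exact h1n
  have whiskT : ∀ j, 1 ≤ j → j ≤ n → x j * y j ∈ J.radical := by
    intro j hj1 hjn
    rcases (show j = 1 ∨ (2 ≤ j ∧ j ≤ n - 4) ∨ j = n - 3 ∨ j = n - 2 ∨ j = n - 1 ∨ j = n
        by omega) with rfl | ⟨ha, hb⟩ | rfl | rfl | rfl | rfl
    · exact h1y
    · exact whisk j ha hb
    · exact h3y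
    · exact h2y
    · exact h1y'
    · exact hny
  have hIT : I ≤ J.radical := by
    rw [hI, Ideal.span_le]
    rintro p (⟨j, hj, rfl⟩ | ⟨j, hj, rfl⟩)
    · exact edgeT j (Finset.mem_Icc.mp hj).1 (Finset.mem_Icc.mp hj).2
    · exact whiskT j (Finset.mem_Icc.mp hj).1 (Finset.mem_Icc.mp hj).2
  -- generators of I
  have edgeI : ∀ j, 1 ≤ j → j ≤ n → x j * x (j + 1) ∈ I := fun j h1 h2 =>
    hI ▸ Ideal.subset_span (Or.inl ⟨j, Finset.mem_Icc.mpr ⟨h1, h2⟩, rfl⟩)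
  have whiskI : ∀ j, 1 ≤ j → j ≤ n → x j * y j ∈ I := fun j h1 h2 =>
    hI ▸ Ideal.subset_span (Or.inr ⟨j, Finset.mem_Icc.mpr ⟨h1, h2⟩, rfl⟩)
  have hJI : J ≤ I := by
    rw [hJ, Ideal.span_le]
    rintro p ⟨i, hi, rfl⟩
    simp only [Set.mem_Iio] at hi
    rcases (show i = 0 ∨ i = 1 ∨ (2 ≤ i ∧ i ≤ n - 4) ∨ i = n - 3 ∨ i = n - 2 ∨ i = n - 1
        by omega) with rfl | rfl | ⟨ha, hb⟩ | rfl | rfl | rfl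
    · rw [hq0]; exact edgeI 1 (by omega) (by omega)
    · rw [hq1]
      refine Ideal.add_mem _ ?_ (edgeI 2 (by omega) (by omega))
      have e : x 1 * x n = x n * x (n + 1) := by rw [hxn1, mul_comm]
      rw [e]; exact edgeI n (by omega) le_rfl
    · rw [hqi i ha hb]
      exact Ideal.add_mem _ (whiskI i (by omega) (by omega))
        (edgeI (i + 1) (by omega) (by omega))
    · rw [hqn3]
      refine Ideal.add_mem _ (whiskI 1 (by omega) (by omega)) ?_
      have := edgeI (n - 1) (by omega) (by omega)
      rwa [e10] at this
    · rw [hqn2]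
      refine Ideal.add_mem _ (Ideal.add_mem _ (whiskI (n - 3) (by omega) (by omega)) ?_) ?_
      · have := edgeI (n - 2) (by omega) (by omega)
        rwa [e21] at this
      · have e : x (n - 2) * y (n - 2) * x n * y n
            = (x (n - 2) * y (n - 2)) * (x n * y n) := by ring
        rw [e]; exact Ideal.mul_mem_right _ _ (whiskI (n - 2) (by omega) (by omega))
    · rw [hqn1]
      exact Ideal.add_mem _ (Ideal.add_mem _ (whiskI (n - 2) (by omega) (by omega))
        (whiskI (n - 1) (by omega) (by omega))) (whiskI n (by omega) (by omega))
  -- the reverse inclusion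
  have hTI : J.radical ≤ I := by
    intro f hf
    obtain ⟨k, hk⟩ := hf
    have hfk : f ^ (k + 1) ∈ I := hJI (by rw [pow_succ']; exact Ideal.mul_mem_left _ _ hk)
    have key : ∀ m ∈ f.support, ∃ e : (Fin n ⊕ Fin n) →₀ ℕ, e ≤ m ∧
        (monomial e 1 : MvPolynomial (Fin n ⊕ Fin n) K) ∈ I := by
      intro m hm
      by_contra hcon
      push_neg at hcon
      set φ : MvPolynomial (Fin n ⊕ Fin n) K →ₐ[K] MvPolynomial (Fin n ⊕ Fin n) K :=
        aeval (fun s => if m s = 0 then 0 else X s) with hφ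
      -- every generator of I is killed by φ
      have hne_cyc : ∀ j : ℕ, 1 ≤ j →
          (Sum.inl (((j - 1 : ℕ)) : Fin n) : Fin n ⊕ Fin n)
            ≠ Sum.inl (((j + 1 - 1 : ℕ)) : Fin n) := by
        intro j hj h
        have h' : (((j - 1 : ℕ)) : Fin n) = ((j : ℕ) : Fin n) := by
          have : (j + 1 - 1 : ℕ) = j := by omega
          rw [this] at h
          exact Sum.inl.injEq _ _ ▸ (by injection h)
        have hval : (j - 1) % n = j % n := by
          have := congrArg Fin.val h'
          simpa [Fin.val_natCast] using this
        have hdvd : n ∣ j - (j - 1) := (Nat.modEq_iff_dvd' (by omega)).mp hval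
        have : j - (j - 1) = 1 := by omega
        rw [this] at hdvd
        have := Nat.le_of_dvd (by omega) hdvd
        omega
      have hgenker : ∀ p ∈ ({p | ∃ j ∈ Finset.Icc 1 n, p = x j * x (j + 1)} ∪
          {p | ∃ j ∈ Finset.Icc 1 n, p = x j * y j} :
            Set (MvPolynomial (Fin n ⊕ Fin n) K)), φ p = 0 := by
        rintro p (⟨j, hj, rfl⟩ | ⟨j, hj, rfl⟩)
        · obtain ⟨hj1, hj2⟩ := Finset.mem_Icc.mp hj
          have hne := hne_cyc j hj1
          have hmemI : x j * x (j + 1) ∈ I := edgeI j hj1 hj2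
          have hnot : ¬ (Finsupp.single (Sum.inl (((j - 1 : ℕ)) : Fin n) : Fin n ⊕ Fin n) 1 +
              Finsupp.single (Sum.inl (((j + 1 - 1 : ℕ)) : Fin n)) 1 ≤ m) := by
            intro hle
            refine hcon _ hle ?_
            rw [← sunlet_X_mul_X, ← hx j, ← hx (j + 1)]
            exact hmemI
          rw [sunlet_single_add_single_le hne] at hnot
          rw [hx j, hx (j + 1), map_mul]
          rcases (show m (Sum.inl (((j - 1 : ℕ)) : Fin n) : Fin n ⊕ Fin n) = 0 ∨
              m (Sum.inl (((j + 1 - 1 : ℕ)) : Fin n)) = 0 by omega) with h | h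
          · have : φ (X (Sum.inl (((j - 1 : ℕ)) : Fin n) : Fin n ⊕ Fin n)) = 0 := by
              rw [hφ, aeval_X, if_pos h]
            rw [this, zero_mul]
          · have : φ (X (Sum.inl (((j + 1 - 1 : ℕ)) : Fin n) : Fin n ⊕ Fin n)) = 0 := by
              rw [hφ, aeval_X, if_pos h]
            rw [this, mul_zero]
        · obtain ⟨hj1, hj2⟩ := Finset.mem_Icc.mp hj
          have hne : (Sum.inl (((j - 1 : ℕ)) : Fin n) : Fin n ⊕ Fin n)
              ≠ Sum.inr (((j - 1 : ℕ)) : Fin n) := Sum.inl_ne_inr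
          have hmemI : x j * y j ∈ I := whiskI j hj1 hj2
          have hnot : ¬ (Finsupp.single (Sum.inl (((j - 1 : ℕ)) : Fin n) : Fin n ⊕ Fin n) 1 +
              Finsupp.single (Sum.inr (((j - 1 : ℕ)) : Fin n) : Fin n ⊕ Fin n) 1 ≤ m) := by
            intro hle
            refine hcon _ hle ?_
            rw [← sunlet_X_mul_X, ← hx j, ← hy j]
            exact hmemI
          rw [sunlet_single_add_single_le hne] at hnot
          rw [hx j, hy j, map_mul]
          rcases (show m (Sum.inl (((j - 1 : ℕ)) : Fin n) : Fin n ⊕ Fin n) = 0 ∨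
              m (Sum.inr (((j - 1 : ℕ)) : Fin n) : Fin n ⊕ Fin n) = 0 by omega) with h | h
          · have : φ (X (Sum.inl (((j - 1 : ℕ)) : Fin n) : Fin n ⊕ Fin n)) = 0 := by
              rw [hφ, aeval_X, if_pos h]
            rw [this, zero_mul]
          · have : φ (X (Sum.inr (((j - 1 : ℕ)) : Fin n) : Fin n ⊕ Fin n)) = 0 := by
              rw [hφ, aeval_X, if_pos h]
            rw [this, mul_zero]
      have hIker : I ≤ RingHom.ker (φ : MvPolynomial (Fin n ⊕ Fin n) K →+*
          MvPolynomial (Fin n ⊕ Fin n) K) := by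
        rw [hI, Ideal.span_le]
        intro p hp
        exact hgenker p hp
      have hφf : φ f = 0 := by
        have h1 : (φ f) ^ (k + 1) = 0 := by
          rw [← map_pow]
          exact hIker hfk
        exact pow_eq_zero_iff (Nat.succ_ne_zero k) |>.mp h1
      have hterm : ∀ (e : (Fin n ⊕ Fin n) →₀ ℕ) (c : K),
          coeff m (φ (monomial e c)) = if e = m then c else 0 := by
        intro e c
        by_cases hs : ∀ s ∈ e.support, m s ≠ 0
        · have he : φ (monomial e c) = monomial e c := by
            have hpr : (Finsupp.prod e fun t k =>
                  (if m t = 0 then (0 : MvPolynomial (Fin n ⊕ Fin n) K) else X t) ^ k)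
                = Finsupp.prod e fun t k => X t ^ k := by
              apply Finsupp.prod_congr
              intro s hs'
              rw [if_neg (hs s hs')]
            rw [hφ, aeval_monomial, hpr, algebraMap_eq]
            exact (monomial_eq).symm
          rw [he, coeff_monomial]
        · push_neg at hs
          obtain ⟨s, hs1, hs2⟩ := hs
          have he : φ (monomial e c) = 0 := by
            rw [hφ, aeval_monomial]
            have hp : (Finsupp.prod e fun t k =>
                (if m t = 0 then (0 : MvPolynomial (Fin n ⊕ Fin n) K) else X t) ^ k) = 0 := by
              apply Finset.prod_eq_zero hs1
              show (if m s = 0 then (0 : MvPolynomial (Fin n ⊕ Fin n) K) else X s) ^ e s = 0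
              rw [if_pos hs2, zero_pow (Finsupp.mem_support_iff.mp hs1)]
            rw [hp, mul_zero]
          rw [he, coeff_zero, if_neg]
          rintro rfl
          exact (Finsupp.mem_support_iff.mp hs1) hs2
      have hco : coeff m (φ f) = coeff m f := by
        conv_lhs => rw [← support_sum_monomial_coeff f]
        rw [map_sum, coeff_sum]
        rw [Finset.sum_congr rfl (fun e _ => hterm e (coeff e f))]
        rw [Finset.sum_ite_eq' f.support m (fun e => coeff e f), if_pos hm]
      rw [hφf, coeff_zero] at hco
      exact (mem_support_iff.mp hm) hco.symm
    rw [← support_sum_monomial_coeff f]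
    refine Ideal.sum_mem _ fun m hm => ?_
    obtain ⟨e, hle, hmem⟩ := key m hm
    have hdecomp : (monomial m (coeff m f) : MvPolynomial (Fin n ⊕ Fin n) K)
        = monomial e 1 * monomial (m - e) (coeff m f) := by
      rw [monomial_mul, one_mul, add_tsub_cancel_of_le hle]
    rw [hdecomp]
    exact Ideal.mul_mem_right _ _ hmem
  exact le_antisymm hIT hTI
end

section
/- Let S_5 be the 5-sunlet graph, with edge ideal I(S_5) in R = K[x_1,...,x_5,y_1,...,y_5] over a field K. Define q_0 = x_1 x_2; q_1 = x_1 x_5 + x_2 x_3; q_2 = x_1 y_1 + x_4 x_5; q_3 = x_2 y_2 + x_3 x_4 + x_3 y_3 x_5 y_5; q_4 = x_3 y_3 + x_4 y_4 + x_5 y_5. Then I(S_5) equals the radical of the ideal (q_0, q_1, q_2, q_3, q_4). -/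
open MvPolynomial

section SunletAux

variable {K : Type*} [Field K]

/-- The ideal generated by a set of variables in a polynomial ring over a field is prime. -/
lemma sunlet_span_X_isPrime {σ : Type*} (s : Set σ) :
    (Ideal.span (MvPolynomial.X '' s : Set (MvPolynomial σ K))).IsPrime := by
  classical
  set φ : MvPolynomial σ K →ₐ[K] MvPolynomial σ K :=
    aeval (fun i => if i ∈ s then 0 else X i) with hφ
  have key : ∀ f : MvPolynomial σ K,
      f - φ f ∈ Ideal.span (MvPolynomial.X '' s : Set (MvPolynomial σ K)) := by
    intro f
    induction f using MvPolynomial.induction_on with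
    | C a =>
        have : (C a : MvPolynomial σ K) - φ (C a) = 0 := by simp [hφ]
        rw [this]; exact Ideal.zero_mem _
    | add p q hp hq =>
        have : p + q - φ (p + q) = (p - φ p) + (q - φ q) := by rw [map_add]; ring
        rw [this]; exact Ideal.add_mem _ hp hq
    | mul_X p n hp =>
        by_cases hn : n ∈ s
        · have : φ (p * X n) = 0 := by simp [hφ, hn]
          rw [this, sub_zero]
          exact Ideal.mul_mem_left _ _ (Ideal.subset_span ⟨n, hn, rfl⟩)
        · have : p * X n - φ (p * X n) = (p - φ p) * X n := by
            rw [map_mul]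
            have h2 : φ (X n) = X n := by simp [hφ, hn]
            rw [h2]; ring
          rw [this]; exact Ideal.mul_mem_right _ _ hp
  have hker : Ideal.span (MvPolynomial.X '' s : Set (MvPolynomial σ K)) = RingHom.ker φ := by
    apply le_antisymm
    · rw [Ideal.span_le]
      rintro _ ⟨i, hi, rfl⟩
      simp [RingHom.mem_ker, hφ, hi]
    · intro f hf
      rw [RingHom.mem_ker] at hf
      have h2 := key f
      rwa [hf, sub_zero] at h2
  rw [hker]
  exact RingHom.ker_isPrime _

lemma sunlet_mem2 {σ : Type*} {C : Finset σ} {u v : σ} (h : u ∈ C ∨ v ∈ C) :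
    (X u : MvPolynomial σ K) * X v ∈ Ideal.span (MvPolynomial.X '' (↑C : Set σ)) := by
  rcases h with h | h
  · exact Ideal.mul_mem_right _ _ (Ideal.subset_span ⟨u, h, rfl⟩)
  · exact Ideal.mul_mem_left _ _ (Ideal.subset_span ⟨v, h, rfl⟩)

/-- The edge ideal of the 5-sunlet is contained in the prime of any vertex cover. -/
lemma sunlet_edges_le_cover (C : Finset (Fin 5 ⊕ Fin 5))
    (h01 : Sum.inl 0 ∈ C ∨ Sum.inl 1 ∈ C)
    (h12 : Sum.inl 1 ∈ C ∨ Sum.inl 2 ∈ C)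
    (h23 : Sum.inl 2 ∈ C ∨ Sum.inl 3 ∈ C)
    (h34 : Sum.inl 3 ∈ C ∨ Sum.inl 4 ∈ C)
    (h40 : Sum.inl 4 ∈ C ∨ Sum.inl 0 ∈ C)
    (w0 : Sum.inl 0 ∈ C ∨ Sum.inr 0 ∈ C)
    (w1 : Sum.inl 1 ∈ C ∨ Sum.inr 1 ∈ C)
    (w2 : Sum.inl 2 ∈ C ∨ Sum.inr 2 ∈ C)
    (w3 : Sum.inl 3 ∈ C ∨ Sum.inr 3 ∈ C)
    (w4 : Sum.inl 4 ∈ C ∨ Sum.inr 4 ∈ C) :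
    Ideal.span ({X (Sum.inl 0) * X (Sum.inl 1), X (Sum.inl 1) * X (Sum.inl 2),
      X (Sum.inl 2) * X (Sum.inl 3), X (Sum.inl 3) * X (Sum.inl 4),
      X (Sum.inl 4) * X (Sum.inl 0),
      X (Sum.inl 0) * X (Sum.inr 0), X (Sum.inl 1) * X (Sum.inr 1),
      X (Sum.inl 2) * X (Sum.inr 2), X (Sum.inl 3) * X (Sum.inr 3),
      X (Sum.inl 4) * X (Sum.inr 4)} : Set (MvPolynomial (Fin 5 ⊕ Fin 5) K)) ≤
    Ideal.span (MvPolynomial.X '' (↑C : Set (Fin 5 ⊕ Fin 5))) := by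
  rw [Ideal.span_le]
  rintro g hg
  simp only [Set.mem_insert_iff, Set.mem_singleton_iff] at hg
  rcases hg with rfl | rfl | rfl | rfl | rfl | rfl | rfl | rfl | rfl | rfl
  exacts [sunlet_mem2 h01, sunlet_mem2 h12, sunlet_mem2 h23, sunlet_mem2 h34,
    sunlet_mem2 h40, sunlet_mem2 w0, sunlet_mem2 w1, sunlet_mem2 w2,
    sunlet_mem2 w3, sunlet_mem2 w4]

set_option synthInstance.maxSize 5000 in
set_option synthInstance.maxHeartbeats 2000000 in
set_option maxHeartbeats 1000000 in
/-- The combinatorial core: a subset of the vertices of the 5-sunlet which meets every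
minimal vertex cover contains an edge. -/
lemma sunlet_taut : ∀ (a0 a1 a2 a3 a4 b0 b1 b2 b3 b4 : Bool),
    (a0 ∨ a1 ∨ a2 ∨ a3 ∨ a4) →
    (b0 ∨ a1 ∨ a2 ∨ a3 ∨ a4) →
    (a0 ∨ b1 ∨ a2 ∨ a3 ∨ a4) →
    (a0 ∨ a1 ∨ b2 ∨ a3 ∨ a4) →
    (a0 ∨ a1 ∨ a2 ∨ b3 ∨ a4) →
    (a0 ∨ a1 ∨ a2 ∨ a3 ∨ b4) →
    (b0 ∨ a1 ∨ b2 ∨ a3 ∨ a4) →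
    (b0 ∨ a1 ∨ a2 ∨ b3 ∨ a4) →
    (a0 ∨ b1 ∨ a2 ∨ b3 ∨ a4) →
    (a0 ∨ b1 ∨ a2 ∨ a3 ∨ b4) →
    (a0 ∨ a1 ∨ b2 ∨ a3 ∨ b4) →
    ((a0 ∧ a1) ∨ (a1 ∧ a2) ∨ (a2 ∧ a3) ∨ (a3 ∧ a4) ∨ (a4 ∧ a0) ∨
     (a0 ∧ b0) ∨ (a1 ∧ b1) ∨ (a2 ∧ b2) ∨ (a3 ∧ b3) ∨ (a4 ∧ b4)) := by
  decide

lemma sunlet_pair_le {σ : Type*} [DecidableEq σ] {u v : σ} (huv : u ≠ v) {m : σ →₀ ℕ}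
    (hu : m u ≠ 0) (hv : m v ≠ 0) :
    Finsupp.single u 1 + Finsupp.single v 1 ≤ m := by
  rw [Finsupp.le_def]
  intro i
  rw [Finsupp.add_apply, Finsupp.single_apply, Finsupp.single_apply]
  rcases eq_or_ne u i with rfl | hiu
  · rw [if_pos rfl, if_neg (fun h => huv h.symm)]
    omega
  · rcases eq_or_ne v i with rfl | hiv
    · rw [if_neg hiu, if_pos rfl]
      omega
    · rw [if_neg hiu, if_neg hiv]
      simp

lemma sunlet_monomial_pair {σ : Type*} (u v : σ) :
    (monomial (Finsupp.single u 1 + Finsupp.single v 1) (1 : K)) = X u * X v := by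
  show _ = monomial (Finsupp.single u 1) (1 : K) * monomial (Finsupp.single v 1) (1 : K)
  rw [monomial_mul, one_mul]

end SunletAux

set_option maxHeartbeats 4000000

/-- Let `S_5` be the `5`-sunlet graph, with edge ideal `I(S_5)` generated by the cycle
edges `x_1x_2, x_2x_3, x_3x_4, x_4x_5, x_5x_1` and the whiskers `x_iy_i`.  With
`q_0 = x_1 x_2`, `q_1 = x_1 x_5 + x_2 x_3`, `q_2 = x_1 y_1 + x_4 x_5`,
`q_3 = x_2 y_2 + x_3 x_4 + x_3 y_3 x_5 y_5`, `q_4 = x_3 y_3 + x_4 y_4 + x_5 y_5`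
we have `I(S_5) = √(q_0, q_1, q_2, q_3, q_4)`.  (Vertices are `0`-indexed: `x_j` of the
paper is `x (j-1)` here.) -/
theorem sunlet_five_eq_radical_span {K : Type*} [Field K]
    (x y : Fin 5 → MvPolynomial (Fin 5 ⊕ Fin 5) K)
    (hx : ∀ i, x i = X (Sum.inl i)) (hy : ∀ i, y i = X (Sum.inr i))
    (I : Ideal (MvPolynomial (Fin 5 ⊕ Fin 5) K))
    (hI : I = Ideal.span
      {x 0 * x 1, x 1 * x 2, x 2 * x 3, x 3 * x 4, x 4 * x 0,
       x 0 * y 0, x 1 * y 1, x 2 * y 2, x 3 * y 3, x 4 * y 4}) :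
    I = (Ideal.span
      {x 0 * x 1,
       x 0 * x 4 + x 1 * x 2,
       x 0 * y 0 + x 3 * x 4,
       x 1 * y 1 + x 2 * x 3 + x 2 * y 2 * x 4 * y 4,
       x 2 * y 2 + x 3 * y 3 + x 4 * y 4}).radical := by
  set Q : Ideal (MvPolynomial (Fin 5 ⊕ Fin 5) K) := Ideal.span
      {x 0 * x 1,
       x 0 * x 4 + x 1 * x 2,
       x 0 * y 0 + x 3 * x 4,
       x 1 * y 1 + x 2 * x 3 + x 2 * y 2 * x 4 * y 4,
       x 2 * y 2 + x 3 * y 3 + x 4 * y 4} with hQ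
  -- membership of the five generators
  have hq0 : x 0 * x 1 ∈ Q := by rw [hQ]; exact Ideal.subset_span (by simp)
  have s1 : x 0 * x 4 + x 1 * x 2 ∈ Q.radical := by
    refine Ideal.le_radical ?_; rw [hQ]; exact Ideal.subset_span (by simp)
  have s2 : x 0 * y 0 + x 3 * x 4 ∈ Q.radical := by
    refine Ideal.le_radical ?_; rw [hQ]; exact Ideal.subset_span (by simp)
  have s3 : x 1 * y 1 + x 2 * x 3 + x 2 * y 2 * x 4 * y 4 ∈ Q.radical := by
    refine Ideal.le_radical ?_; rw [hQ]; exact Ideal.subset_span (by simp)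
  have s4 : x 2 * y 2 + x 3 * y 3 + x 4 * y 4 ∈ Q.radical := by
    refine Ideal.le_radical ?_; rw [hQ]; exact Ideal.subset_span (by simp)
  -- the radical membership certificates for the ten edges
  have r01 : x 0 * x 1 ∈ Q.radical := Ideal.le_radical hq0
  have r04 : x 0 * x 4 ∈ Q.radical := by
    apply Ideal.mem_radical_of_pow_mem (m := 2)
    have h : (x 0 * x 4) ^ 2 =
        (x 0 * x 4) * (x 0 * x 4 + x 1 * x 2) - (x 2 * x 4) * (x 0 * x 1) := by ring
    rw [h]
    exact sub_mem (Ideal.mul_mem_left _ _ s1) (Ideal.mul_mem_left _ _ r01)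
  have r12 : x 1 * x 2 ∈ Q.radical := by
    have h : x 1 * x 2 = (x 0 * x 4 + x 1 * x 2) - x 0 * x 4 := by ring
    rw [h]; exact sub_mem s1 r04
  have r0y0 : x 0 * y 0 ∈ Q.radical := by
    apply Ideal.mem_radical_of_pow_mem (m := 2)
    have h : (x 0 * y 0) ^ 2 =
        (x 0 * y 0) * (x 0 * y 0 + x 3 * x 4) - (y 0 * x 3) * (x 0 * x 4) := by ring
    rw [h]
    exact sub_mem (Ideal.mul_mem_left _ _ s2) (Ideal.mul_mem_left _ _ r04)
  have r34 : x 3 * x 4 ∈ Q.radical := by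
    have h : x 3 * x 4 = (x 0 * y 0 + x 3 * x 4) - x 0 * y 0 := by ring
    rw [h]; exact sub_mem s2 r0y0
  have r1y1 : x 1 * y 1 ∈ Q.radical := by
    apply Ideal.mem_radical_of_pow_mem (m := 2)
    have h : (x 1 * y 1) ^ 2 =
        (x 1 * y 1) * (x 1 * y 1 + x 2 * x 3 + x 2 * y 2 * x 4 * y 4)
          - (x 3 * y 1) * (x 1 * x 2) - (y 1 * y 2 * x 4 * y 4) * (x 1 * x 2) := by ring
    rw [h]
    exact sub_mem (sub_mem (Ideal.mul_mem_left _ _ s3) (Ideal.mul_mem_left _ _ r12))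
      (Ideal.mul_mem_left _ _ r12)
  have g' : x 2 * x 3 + x 2 * y 2 * x 4 * y 4 ∈ Q.radical := by
    have h : x 2 * x 3 + x 2 * y 2 * x 4 * y 4 =
        (x 1 * y 1 + x 2 * x 3 + x 2 * y 2 * x 4 * y 4) - x 1 * y 1 := by ring
    rw [h]; exact sub_mem s3 r1y1
  have r23 : x 2 * x 3 ∈ Q.radical := by
    apply Ideal.mem_radical_of_pow_mem (m := 2)
    have h : (x 2 * x 3) ^ 2 =
        (x 2 * x 3) * (x 2 * x 3 + x 2 * y 2 * x 4 * y 4)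
          - (x 2 * x 2 * y 2 * y 4) * (x 3 * x 4) := by ring
    rw [h]
    exact sub_mem (Ideal.mul_mem_left _ _ g') (Ideal.mul_mem_left _ _ r34)
  have h' : x 2 * y 2 * x 4 * y 4 ∈ Q.radical := by
    have h : x 2 * y 2 * x 4 * y 4 =
        (x 2 * x 3 + x 2 * y 2 * x 4 * y 4) - x 2 * x 3 := by ring
    rw [h]; exact sub_mem g' r23
  have r4y4 : x 4 * y 4 ∈ Q.radical := by
    apply Ideal.mem_radical_of_pow_mem (m := 2)
    have h : (x 4 * y 4) ^ 2 =
        (x 4 * y 4) * (x 2 * y 2 + x 3 * y 3 + x 4 * y 4)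
          - (x 2 * y 2 * x 4 * y 4) - (y 3 * y 4) * (x 3 * x 4) := by ring
    rw [h]
    exact sub_mem (sub_mem (Ideal.mul_mem_left _ _ s4) h') (Ideal.mul_mem_left _ _ r34)
  have k' : x 2 * y 2 + x 3 * y 3 ∈ Q.radical := by
    have h : x 2 * y 2 + x 3 * y 3 =
        (x 2 * y 2 + x 3 * y 3 + x 4 * y 4) - x 4 * y 4 := by ring
    rw [h]; exact sub_mem s4 r4y4
  have r2y2 : x 2 * y 2 ∈ Q.radical := by
    apply Ideal.mem_radical_of_pow_mem (m := 2)
    have h : (x 2 * y 2) ^ 2 =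
        (y 2 * x 2) * (x 2 * y 2 + x 3 * y 3) - (y 2 * y 3) * (x 2 * x 3) := by ring
    rw [h]
    exact sub_mem (Ideal.mul_mem_left _ _ k') (Ideal.mul_mem_left _ _ r23)
  have r3y3 : x 3 * y 3 ∈ Q.radical := by
    have h : x 3 * y 3 = (x 2 * y 2 + x 3 * y 3) - x 2 * y 2 := by ring
    rw [h]; exact sub_mem k' r2y2
  have r40 : x 4 * x 0 ∈ Q.radical := by
    have h : x 4 * x 0 = x 0 * x 4 := by ring
    rw [h]; exact r04
  apply le_antisymm
  · -- `I ≤ √Q`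
    rw [hI, Ideal.span_le]
    rintro g hg
    simp only [Set.mem_insert_iff, Set.mem_singleton_iff] at hg
    rcases hg with rfl | rfl | rfl | rfl | rfl | rfl | rfl | rfl | rfl | rfl
    exacts [r01, r12, r23, r34, r40, r0y0, r1y1, r2y2, r3y3, r4y4]
  · -- `√Q ≤ I`
    have hQI : Q ≤ I := by
      rw [hQ, hI, Ideal.span_le]
      rintro g hg
      simp only [Set.mem_insert_iff, Set.mem_singleton_iff] at hg
      rcases hg with rfl | rfl | rfl | rfl | rfl
      · exact Ideal.subset_span (by simp)
      · exact add_mem (by rw [show x 0 * x 4 = x 4 * x 0 from mul_comm _ _]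
                          exact Ideal.subset_span (by simp))
          (Ideal.subset_span (by simp))
      · exact add_mem (Ideal.subset_span (by simp)) (Ideal.subset_span (by simp))
      · exact add_mem (add_mem (Ideal.subset_span (by simp)) (Ideal.subset_span (by simp)))
          (Ideal.mul_mem_right _ _ (Ideal.mul_mem_right _ _ (Ideal.subset_span (by simp))))
      · exact add_mem (add_mem (Ideal.subset_span (by simp)) (Ideal.subset_span (by simp)))
          (Ideal.subset_span (by simp))
    intro f hf
    have hfI : f ∈ I.radical := Ideal.radical_mono hQI hf
    simp only [hx, hy] at hI
    have hsupp : ∀ m ∈ f.support,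
        ∃ e ∈ ({Finsupp.single (Sum.inl 0 : Fin 5 ⊕ Fin 5) 1 + Finsupp.single (Sum.inl 1) 1,
          Finsupp.single (Sum.inl 1) 1 + Finsupp.single (Sum.inl 2) 1,
          Finsupp.single (Sum.inl 2) 1 + Finsupp.single (Sum.inl 3) 1,
          Finsupp.single (Sum.inl 3) 1 + Finsupp.single (Sum.inl 4) 1,
          Finsupp.single (Sum.inl 4) 1 + Finsupp.single (Sum.inl 0) 1,
          Finsupp.single (Sum.inl 0) 1 + Finsupp.single (Sum.inr 0) 1,
          Finsupp.single (Sum.inl 1) 1 + Finsupp.single (Sum.inr 1) 1,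
          Finsupp.single (Sum.inl 2) 1 + Finsupp.single (Sum.inr 2) 1,
          Finsupp.single (Sum.inl 3) 1 + Finsupp.single (Sum.inr 3) 1,
          Finsupp.single (Sum.inl 4) 1 + Finsupp.single (Sum.inr 4) 1} :
          Set ((Fin 5 ⊕ Fin 5) →₀ ℕ)), e ≤ m := by
      intro m hm
      have getC : ∀ C : Finset (Fin 5 ⊕ Fin 5),
          I ≤ Ideal.span (MvPolynomial.X '' (↑C : Set (Fin 5 ⊕ Fin 5))) →
          ∃ i ∈ (↑C : Set (Fin 5 ⊕ Fin 5)), m i ≠ 0 := by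
        intro C hC
        have hprime := sunlet_span_X_isPrime (K := K) (↑C : Set (Fin 5 ⊕ Fin 5))
        have hfC : f ∈ Ideal.span (MvPolynomial.X '' (↑C : Set (Fin 5 ⊕ Fin 5))) := by
          have h2 := Ideal.radical_mono hC hfI
          rwa [hprime.radical] at h2
        exact mem_ideal_span_X_image.1 hfC m hm
      have d1 := getC {Sum.inl 0, Sum.inl 1, Sum.inl 2, Sum.inl 3, Sum.inl 4}
        (by rw [hI]; exact sunlet_edges_le_cover _ (by decide) (by decide) (by decide)
              (by decide) (by decide) (by decide) (by decide) (by decide) (by decide) (by decide))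
      have d2 := getC {Sum.inr 0, Sum.inl 1, Sum.inl 2, Sum.inl 3, Sum.inl 4}
        (by rw [hI]; exact sunlet_edges_le_cover _ (by decide) (by decide) (by decide)
              (by decide) (by decide) (by decide) (by decide) (by decide) (by decide) (by decide))
      have d3 := getC {Sum.inl 0, Sum.inr 1, Sum.inl 2, Sum.inl 3, Sum.inl 4}
        (by rw [hI]; exact sunlet_edges_le_cover _ (by decide) (by decide) (by decide)
              (by decide) (by decide) (by decide) (by decide) (by decide) (by decide) (by decide))
      have d4 := getC {Sum.inl 0, Sum.inl 1, Sum.inr 2, Sum.inl 3, Sum.inl 4}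
        (by rw [hI]; exact sunlet_edges_le_cover _ (by decide) (by decide) (by decide)
              (by decide) (by decide) (by decide) (by decide) (by decide) (by decide) (by decide))
      have d5 := getC {Sum.inl 0, Sum.inl 1, Sum.inl 2, Sum.inr 3, Sum.inl 4}
        (by rw [hI]; exact sunlet_edges_le_cover _ (by decide) (by decide) (by decide)
              (by decide) (by decide) (by decide) (by decide) (by decide) (by decide) (by decide))
      have d6 := getC {Sum.inl 0, Sum.inl 1, Sum.inl 2, Sum.inl 3, Sum.inr 4}
        (by rw [hI]; exact sunlet_edges_le_cover _ (by decide) (by decide) (by decide)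
              (by decide) (by decide) (by decide) (by decide) (by decide) (by decide) (by decide))
      have d7 := getC {Sum.inr 0, Sum.inl 1, Sum.inr 2, Sum.inl 3, Sum.inl 4}
        (by rw [hI]; exact sunlet_edges_le_cover _ (by decide) (by decide) (by decide)
              (by decide) (by decide) (by decide) (by decide) (by decide) (by decide) (by decide))
      have d8 := getC {Sum.inr 0, Sum.inl 1, Sum.inl 2, Sum.inr 3, Sum.inl 4}
        (by rw [hI]; exact sunlet_edges_le_cover _ (by decide) (by decide) (by decide)
              (by decide) (by decide) (by decide) (by decide) (by decide) (by decide) (by decide))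
      have d9 := getC {Sum.inl 0, Sum.inr 1, Sum.inl 2, Sum.inr 3, Sum.inl 4}
        (by rw [hI]; exact sunlet_edges_le_cover _ (by decide) (by decide) (by decide)
              (by decide) (by decide) (by decide) (by decide) (by decide) (by decide) (by decide))
      have d10 := getC {Sum.inl 0, Sum.inr 1, Sum.inl 2, Sum.inl 3, Sum.inr 4}
        (by rw [hI]; exact sunlet_edges_le_cover _ (by decide) (by decide) (by decide)
              (by decide) (by decide) (by decide) (by decide) (by decide) (by decide) (by decide))
      have d11 := getC {Sum.inl 0, Sum.inl 1, Sum.inr 2, Sum.inl 3, Sum.inr 4}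
        (by rw [hI]; exact sunlet_edges_le_cover _ (by decide) (by decide) (by decide)
              (by decide) (by decide) (by decide) (by decide) (by decide) (by decide) (by decide))
      simp only [Finset.coe_insert, Set.mem_insert_iff, Finset.coe_singleton,
        Set.mem_singleton_iff, exists_eq_or_imp, exists_eq_left, ne_eq] at d1 d2 d3 d4 d5 d6 d7 d8 d9 d10 d11
      have T := sunlet_taut (m (Sum.inl 0) != 0) (m (Sum.inl 1) != 0) (m (Sum.inl 2) != 0)
        (m (Sum.inl 3) != 0) (m (Sum.inl 4) != 0) (m (Sum.inr 0) != 0) (m (Sum.inr 1) != 0)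
        (m (Sum.inr 2) != 0) (m (Sum.inr 3) != 0) (m (Sum.inr 4) != 0)
        (by simpa [bne_iff_ne] using d1) (by simpa [bne_iff_ne] using d2)
        (by simpa [bne_iff_ne] using d3) (by simpa [bne_iff_ne] using d4)
        (by simpa [bne_iff_ne] using d5) (by simpa [bne_iff_ne] using d6)
        (by simpa [bne_iff_ne] using d7) (by simpa [bne_iff_ne] using d8)
        (by simpa [bne_iff_ne] using d9) (by simpa [bne_iff_ne] using d10)
        (by simpa [bne_iff_ne] using d11)
      simp only [bne_iff_ne, ne_eq] at T
      rcases T with ⟨h1, h2⟩ | ⟨h1, h2⟩ | ⟨h1, h2⟩ | ⟨h1, h2⟩ | ⟨h1, h2⟩ | ⟨h1, h2⟩ | ⟨h1, h2⟩ |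
        ⟨h1, h2⟩ | ⟨h1, h2⟩ | ⟨h1, h2⟩
      · exact ⟨_, by simp, sunlet_pair_le (by decide) h1 h2⟩
      · exact ⟨Finsupp.single (Sum.inl 1) 1 + Finsupp.single (Sum.inl 2) 1, by simp,
          sunlet_pair_le (by decide) h1 h2⟩
      · exact ⟨Finsupp.single (Sum.inl 2) 1 + Finsupp.single (Sum.inl 3) 1, by simp,
          sunlet_pair_le (by decide) h1 h2⟩
      · exact ⟨Finsupp.single (Sum.inl 3) 1 + Finsupp.single (Sum.inl 4) 1, by simp,
          sunlet_pair_le (by decide) h1 h2⟩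
      · exact ⟨Finsupp.single (Sum.inl 4) 1 + Finsupp.single (Sum.inl 0) 1, by simp,
          sunlet_pair_le (by decide) h1 h2⟩
      · exact ⟨Finsupp.single (Sum.inl 0) 1 + Finsupp.single (Sum.inr 0) 1, by simp,
          sunlet_pair_le (by decide) h1 h2⟩
      · exact ⟨Finsupp.single (Sum.inl 1) 1 + Finsupp.single (Sum.inr 1) 1, by simp,
          sunlet_pair_le (by decide) h1 h2⟩
      · exact ⟨Finsupp.single (Sum.inl 2) 1 + Finsupp.single (Sum.inr 2) 1, by simp,
          sunlet_pair_le (by decide) h1 h2⟩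
      · exact ⟨Finsupp.single (Sum.inl 3) 1 + Finsupp.single (Sum.inr 3) 1, by simp,
          sunlet_pair_le (by decide) h1 h2⟩
      · exact ⟨Finsupp.single (Sum.inl 4) 1 + Finsupp.single (Sum.inr 4) 1, by simp,
          sunlet_pair_le (by decide) h1 h2⟩
    have hfmem : f ∈ Ideal.span
        ((fun e => monomial e (1 : K)) ''
          ({Finsupp.single (Sum.inl 0 : Fin 5 ⊕ Fin 5) 1 + Finsupp.single (Sum.inl 1) 1,
          Finsupp.single (Sum.inl 1) 1 + Finsupp.single (Sum.inl 2) 1,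
          Finsupp.single (Sum.inl 2) 1 + Finsupp.single (Sum.inl 3) 1,
          Finsupp.single (Sum.inl 3) 1 + Finsupp.single (Sum.inl 4) 1,
          Finsupp.single (Sum.inl 4) 1 + Finsupp.single (Sum.inl 0) 1,
          Finsupp.single (Sum.inl 0) 1 + Finsupp.single (Sum.inr 0) 1,
          Finsupp.single (Sum.inl 1) 1 + Finsupp.single (Sum.inr 1) 1,
          Finsupp.single (Sum.inl 2) 1 + Finsupp.single (Sum.inr 2) 1,
          Finsupp.single (Sum.inl 3) 1 + Finsupp.single (Sum.inr 3) 1,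
          Finsupp.single (Sum.inl 4) 1 + Finsupp.single (Sum.inr 4) 1} :
          Set ((Fin 5 ⊕ Fin 5) →₀ ℕ))) :=
      mem_ideal_span_monomial_image.2 hsupp
    refine Ideal.span_le.2 ?_ hfmem
    rintro g ⟨e, he, rfl⟩
    simp only [Set.mem_insert_iff, Set.mem_singleton_iff] at he
    rw [hI]
    rcases he with rfl | rfl | rfl | rfl | rfl | rfl | rfl | rfl | rfl | rfl <;>
      exact Ideal.subset_span (by simp [sunlet_monomial_pair])
end

section
/- Let n ≥ 3 and k ≥ 1 be integers, let C_n be the cycle graph on the vertex set {x_1,...,x_n} (with edges x_1x_2, ..., x_{n−1}x_n, x_nx_1), and let G be the graph obtained from C_n by adding, to each vertex x_i, the k edges x_i y_{i,1}, ..., x_i y_{i,k} to new vertices y_{i,l}. Then the set A consisting of the vertices x_{2j−1} for j = 1,...,⌈n/2⌉ together with the vertices y_{2j,1},...,y_{2j,k} for j = 1,...,⌊n/2⌋ is a minimal vertex cover of G of cardinality ⌈n/2⌉ + ⌊n/2⌋·k. -/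
lemma range_count_parity (n r : ℕ) (hr : r < 2) :
    ((Finset.range n).filter (fun i => i % 2 = r)).card = (n + 1 - r) / 2 := by
  induction n with
  | zero => simp; omega
  | succ m ih =>
    rw [Finset.range_add_one, Finset.filter_insert]
    by_cases h : m % 2 = r
    · rw [if_pos h, Finset.card_insert_of_notMem (by simp)]; omega
    · rw [if_neg h]; omega

lemma fin_count_parity (n r : ℕ) (hr : r < 2) :
    ((Finset.univ.filter (fun i : Fin n => i.val % 2 = r)).card) = (n + 1 - r) / 2 := by
  rw [Finset.card_filter,
    Fin.sum_univ_eq_sum_range (fun i => if i % 2 = r then (1:ℕ) else 0) n,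
    ← Finset.card_filter, range_count_parity n r hr]

/-- Let `n ≥ 3`, `k ≥ 1`, let `C_n` be the cycle on `x_1, …, x_n` and let `G` be obtained
from `C_n` by adding the `k` whiskers `x_i y_{i,1}, …, x_i y_{i,k}` at each vertex `x_i`.
Then the set `A = {x_{2j-1} : 1 ≤ j ≤ ⌈n/2⌉} ∪ {y_{2j,l} : 1 ≤ j ≤ ⌊n/2⌋, 1 ≤ l ≤ k}`
is a minimal vertex cover of `G` of cardinality `⌈n/2⌉ + ⌊n/2⌋·k`.  (Vertices are
`0`-indexed here: the paper's `x_j` is `Sum.inl (j-1)`, so `x_{2j-1}` has even index and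
`y_{2j,l}` has odd first index.) -/
theorem cycle_multiwhisker_minimal_vertex_cover (n k : ℕ) [NeZero n]
    (hn : 3 ≤ n) (hk : 1 ≤ k)
    (G : SimpleGraph (Fin n ⊕ Fin n × Fin k))
    (hG : G = SimpleGraph.fromEdgeSet
      ({e | ∃ i : Fin n, e = s(Sum.inl i, Sum.inl (i + 1))} ∪
       {e | ∃ (i : Fin n) (l : Fin k), e = s(Sum.inl i, Sum.inr (i, l))}))
    (A : Finset (Fin n ⊕ Fin n × Fin k))
    (hA : A = ((Finset.univ.filter fun i : Fin n => i.val % 2 = 0).image Sum.inl) ∪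
      ((Finset.univ.filter fun p : Fin n × Fin k => p.1.val % 2 = 1).image Sum.inr)) :
    (∀ u v, G.Adj u v → u ∈ A ∨ v ∈ A) ∧
      (∀ B ⊂ A, ¬ ∀ u v, G.Adj u v → u ∈ B ∨ v ∈ B) ∧
      A.card = (n + 1) / 2 + (n / 2) * k := by
  subst hG
  have hmemA : ∀ v, v ∈ A ↔ (∃ i : Fin n, i.val % 2 = 0 ∧ v = Sum.inl i) ∨
      (∃ (i : Fin n) (l : Fin k), i.val % 2 = 1 ∧ v = Sum.inr (i, l)) := by
    intro v
    subst hA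
    simp only [Finset.mem_union, Finset.mem_image, Finset.mem_filter, Finset.mem_univ,
      true_and, Prod.exists]
    constructor
    · rintro (⟨i, h, rfl⟩ | ⟨i, l, h, rfl⟩)
      · exact Or.inl ⟨i, h, rfl⟩
      · exact Or.inr ⟨i, l, h, rfl⟩
    · rintro (⟨i, h, rfl⟩ | ⟨i, l, h, rfl⟩)
      · exact Or.inl ⟨i, h, rfl⟩
      · exact Or.inr ⟨i, l, h, rfl⟩
  -- parity of successor
  have hsucc : ∀ i : Fin n, i.val % 2 = 1 → ((i + 1 : Fin n)).val % 2 = 0 := by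
    intro i hi
    have h1 : ((i + 1 : Fin n)).val = (i.val + 1) % n := by
      simp [Fin.add_def]
    by_cases h : i.val + 1 = n
    · rw [h1, h, Nat.mod_self]
    · have : i.val + 1 < n := lt_of_le_of_ne i.isLt h
      rw [h1, Nat.mod_eq_of_lt this]
      omega
  refine ⟨?_, ?_, ?_⟩
  · -- cover
    intro u v huv
    rw [SimpleGraph.fromEdgeSet_adj] at huv
    obtain ⟨hmem, hne⟩ := huv
    rcases hmem with ⟨i, hi⟩ | ⟨i, l, hi⟩
    · rw [Sym2.eq_iff] at hi
      by_cases hp : i.val % 2 = 0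
      · rcases hi with ⟨rfl, rfl⟩ | ⟨rfl, rfl⟩
        · exact Or.inl ((hmemA _).2 (Or.inl ⟨i, hp, rfl⟩))
        · exact Or.inr ((hmemA _).2 (Or.inl ⟨i, hp, rfl⟩))
      · have hp1 : i.val % 2 = 1 := by omega
        have := hsucc i hp1
        rcases hi with ⟨rfl, rfl⟩ | ⟨rfl, rfl⟩
        · exact Or.inr ((hmemA _).2 (Or.inl ⟨i + 1, this, rfl⟩))
        · exact Or.inl ((hmemA _).2 (Or.inl ⟨i + 1, this, rfl⟩))
    · rw [Sym2.eq_iff] at hi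
      by_cases hp : i.val % 2 = 0
      · rcases hi with ⟨rfl, rfl⟩ | ⟨rfl, rfl⟩
        · exact Or.inl ((hmemA _).2 (Or.inl ⟨i, hp, rfl⟩))
        · exact Or.inr ((hmemA _).2 (Or.inl ⟨i, hp, rfl⟩))
      · have hp1 : i.val % 2 = 1 := by omega
        rcases hi with ⟨rfl, rfl⟩ | ⟨rfl, rfl⟩
        · exact Or.inr ((hmemA _).2 (Or.inr ⟨i, l, hp1, rfl⟩))
        · exact Or.inl ((hmemA _).2 (Or.inr ⟨i, l, hp1, rfl⟩))
  · -- minimality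
    intro B hB hcov
    obtain ⟨a, haA, haB⟩ := Finset.exists_of_ssubset hB
    have hBA := hB.subset
    rcases (hmemA a).1 haA with ⟨i, hp, rfl⟩ | ⟨i, l, hp, rfl⟩
    · -- x_i with i even; whisker edge uncovered
      set l0 : Fin k := ⟨0, hk⟩ with hl0
      have hadj : (SimpleGraph.fromEdgeSet
          ({e | ∃ i : Fin n, e = s(Sum.inl i, Sum.inl (i + 1))} ∪
           {e | ∃ (i : Fin n) (l : Fin k), e = s(Sum.inl i, Sum.inr (i, l))})).Adj
          (Sum.inl i) (Sum.inr (i, l0)) := by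
        rw [SimpleGraph.fromEdgeSet_adj]
        exact ⟨Or.inr ⟨i, l0, rfl⟩, by simp⟩
      rcases hcov _ _ hadj with h | h
      · exact haB h
      · have := (hmemA _).1 (hBA h)
        rcases this with ⟨j, hj, hje⟩ | ⟨j, m, hj, hje⟩
        · simp at hje
        · simp only [Sum.inr.injEq, Prod.mk.injEq] at hje
          obtain ⟨rfl, rfl⟩ := hje
          omega
    · -- y_{i,l} with i odd
      have hadj : (SimpleGraph.fromEdgeSet
          ({e | ∃ i : Fin n, e = s(Sum.inl i, Sum.inl (i + 1))} ∪
           {e | ∃ (i : Fin n) (l : Fin k), e = s(Sum.inl i, Sum.inr (i, l))})).Adj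
          (Sum.inl i) (Sum.inr (i, l)) := by
        rw [SimpleGraph.fromEdgeSet_adj]
        exact ⟨Or.inr ⟨i, l, rfl⟩, by simp⟩
      rcases hcov _ _ hadj with h | h
      · have := (hmemA _).1 (hBA h)
        rcases this with ⟨j, hj, hje⟩ | ⟨j, m, hj, hje⟩
        · simp only [Sum.inl.injEq] at hje
          subst hje
          omega
        · simp at hje
      · exact haB h
  · -- cardinality
    subst hA
    rw [Finset.card_union_of_disjoint (by simp [Finset.disjoint_left]),
      Finset.card_image_of_injective _ Sum.inl_injective,
      Finset.card_image_of_injective _ Sum.inr_injective,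
      ← Finset.univ_product_univ,
      Finset.filter_product_left (fun i : Fin n => i.val % 2 = 1),
      Finset.card_product, fin_count_parity n 0 (by omega),
      fin_count_parity n 1 (by omega)]
    simp
end

section
/- Let G be the graph obtained from the 3-cycle C_3 on vertices x_1, x_2, x_3 by adding, to each vertex x_i, the k edges x_i y_{i,1}, ..., x_i y_{i,k} to new vertices (k ≥ 1). Define q_0 = x_1 x_2, q_1 = x_1 x_3 + x_2 x_3, and q_{j+1} = x_1 y_{1,j} + x_2 y_{2,j} + x_3 y_{3,j} for j = 1,...,k. Then the edge ideal I(G) in K[x_1,x_2,x_3, y_{1,1},...,y_{3,k}] equals the radical of the ideal (q_0, q_1, ..., q_{k+1}); in particular ara I(G) ≤ 2 + k. -/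
open MvPolynomial


section AuxTMW

variable {K : Type*} [CommSemiring K] {σ : Type*}

private lemma tmw_aeval_monomial_eq (g : σ → MvPolynomial σ K) (e : σ →₀ ℕ) (c : K)
    (he : ∀ v, e v ≠ 0 → g v = X v) :
    aeval g (monomial e c) = monomial e c := by
  rw [aeval_monomial, monomial_eq, algebraMap_eq]
  congr 1
  apply Finsupp.prod_congr
  intro v hv
  rw [he v (Finsupp.mem_support_iff.mp hv)]

private lemma tmw_aeval_monomial_zero (g : σ → MvPolynomial σ K) (e : σ →₀ ℕ) (c : K)
    (v : σ) (hv : g v = 0) (hev : e v ≠ 0) :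
    aeval g (monomial e c) = 0 := by
  rw [aeval_monomial, Finsupp.prod]
  have h0 : ∏ w ∈ e.support, g w ^ e w = 0 :=
    Finset.prod_eq_zero (Finsupp.mem_support_iff.mpr hev) (by rw [hv, zero_pow hev])
  rw [h0, mul_zero]

private lemma tmw_support_hit (g : σ → MvPolynomial σ K)
    (hg : ∀ v, g v = X v ∨ g v = 0) (f : MvPolynomial σ K)
    (hf : aeval g f = 0) {d : σ →₀ ℕ} (hd : d ∈ f.support) :
    ∃ v, g v = 0 ∧ d v ≠ 0 := by
  classical
  by_contra hcon
  push_neg at hcon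
  have key : coeff d (aeval g f) = coeff d f := by
    conv_lhs => rw [← f.support_sum_monomial_coeff]
    rw [map_sum, coeff_sum]
    rw [Finset.sum_eq_single d ?h1 ?h2]
    · have hall : ∀ v, d v ≠ 0 → g v = X v := by
        intro v hv
        rcases hg v with h | h
        · exact h
        · exact absurd (hcon v h) hv
      rw [tmw_aeval_monomial_eq g d _ hall, coeff_monomial, if_pos rfl]
    case h1 =>
      intro e _ hne
      rcases Classical.em (∀ v, e v ≠ 0 → g v = X v) with he | he
      · rw [tmw_aeval_monomial_eq g e _ he, coeff_monomial, if_neg hne]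
      · push_neg at he
        obtain ⟨v, hev, hgv⟩ := he
        have hz : g v = 0 := (hg v).resolve_left hgv
        rw [tmw_aeval_monomial_zero g e _ v hz hev, coeff_zero]
    case h2 =>
      intro hds
      rw [MvPolynomial.notMem_support_iff.mp hds, monomial_zero, map_zero, coeff_zero]
  rw [hf, coeff_zero] at key
  exact MvPolynomial.mem_support_iff.mp hd key.symm

private lemma tmw_monomial_mem [DecidableEq σ] (I : Ideal (MvPolynomial σ K)) (u w : σ)
    (huw : u ≠ w) (hXI : (X u : MvPolynomial σ K) * X w ∈ I) (d : σ →₀ ℕ)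
    (hu : d u ≠ 0) (hw : d w ≠ 0) (c : K) : monomial d c ∈ I := by
  have hu' : 1 ≤ d u := Nat.one_le_iff_ne_zero.mpr hu
  have hw' : 1 ≤ d w := Nat.one_le_iff_ne_zero.mpr hw
  have hle : Finsupp.single u 1 + Finsupp.single w 1 ≤ d := by
    rw [Finsupp.le_def]
    intro v
    simp only [Finsupp.add_apply, Finsupp.single_apply]
    split_ifs with h1 h2 h2
    · exact absurd (h1.trans h2.symm) huw
    · subst h1; omega
    · subst h2; omega
    · omega
  have hd : Finsupp.single u 1 + Finsupp.single w 1 +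
      (d - (Finsupp.single u 1 + Finsupp.single w 1)) = d := add_tsub_cancel_of_le hle
  have heq : monomial d c =
      (X u * X w) * monomial (d - (Finsupp.single u 1 + Finsupp.single w 1)) c := by
    rw [X, X, monomial_mul, monomial_mul, one_mul, one_mul, hd]
  rw [heq]
  exact Ideal.mul_mem_right _ _ hXI

end AuxTMW

private noncomputable def tmwA (k : ℕ) (K : Type*) [CommSemiring K] :
    (Fin 3 ⊕ Fin 3 × Fin k) → MvPolynomial (Fin 3 ⊕ Fin 3 × Fin k) K :=
  Sum.elim (fun _ => 0) (fun p => X (Sum.inr p))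

private noncomputable def tmwC (k : ℕ) (K : Type*) [CommSemiring K] (c : Fin 3) :
    (Fin 3 ⊕ Fin 3 × Fin k) → MvPolynomial (Fin 3 ⊕ Fin 3 × Fin k) K :=
  Sum.elim (fun a => if a = c then X (Sum.inl a) else 0)
    (fun p => if p.1 = c then 0 else X (Sum.inr p))

/-- The *arithmetical rank* of an ideal `I`: the least number `s` of elements
`a_1, …, a_s` of `R` generating an ideal with the same radical as `I`. -/
noncomputable def araRank {R : Type*} [CommRing R] (I : Ideal R) : ℕ :=
  sInf {s : ℕ | ∃ a : Fin s → R, (Ideal.span (Set.range a)).radical = I.radical}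

/-- The *big height* of an ideal `I`: the maximum of the heights of the
minimal primes of `I`. -/
noncomputable def bigHeight {R : Type*} [CommRing R] (I : Ideal R) : ℕ∞ :=
  sSup {h : ℕ∞ | ∃ P ∈ I.minimalPrimes, ∃ hP : P.IsPrime,
    Order.height (⟨P, hP⟩ : PrimeSpectrum R) = h}

/-- The *height* of an ideal `I`: the minimum of the heights of the
minimal primes of `I`. -/
noncomputable def idealHeight {R : Type*} [CommRing R] (I : Ideal R) : ℕ∞ :=
  sInf {h : ℕ∞ | ∃ P ∈ I.minimalPrimes, ∃ hP : P.IsPrime,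
    Order.height (⟨P, hP⟩ : PrimeSpectrum R) = h}

/-- Let `G` be obtained from the `3`-cycle on `x_1, x_2, x_3` by adding the `k ≥ 1`
whiskers `x_i y_{i,1}, …, x_i y_{i,k}` at each vertex.  With `q_0 = x_1 x_2`,
`q_1 = x_1 x_3 + x_2 x_3` and `q_{j+1} = x_1 y_{1,j} + x_2 y_{2,j} + x_3 y_{3,j}`
(`j = 1, …, k`), the edge ideal `I(G)` equals the radical of `(q_0, …, q_{k+1})`;
in particular `ara I(G) ≤ 2 + k`.  (Indices are `0`-based: the paper's `x_j` is `x (j-1)`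
and `y_{i,j}` is `y (i-1) (j-1)`.) -/
theorem triangle_multiwhisker_radical {K : Type*} [Field K] (k : ℕ) (hk : 1 ≤ k)
    (x : Fin 3 → MvPolynomial (Fin 3 ⊕ Fin 3 × Fin k) K)
    (y : Fin 3 → Fin k → MvPolynomial (Fin 3 ⊕ Fin 3 × Fin k) K)
    (hx : ∀ i, x i = X (Sum.inl i))
    (hy : ∀ i l, y i l = X (Sum.inr (i, l)))
    (I : Ideal (MvPolynomial (Fin 3 ⊕ Fin 3 × Fin k) K))
    (hI : I = Ideal.span
      ({x 0 * x 1, x 1 * x 2, x 0 * x 2} ∪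
       {p | ∃ (i : Fin 3) (l : Fin k), p = x i * y i l}))
    (q : ℕ → MvPolynomial (Fin 3 ⊕ Fin 3 × Fin k) K)
    (hq0 : q 0 = x 0 * x 1)
    (hq1 : q 1 = x 0 * x 2 + x 1 * x 2)
    (hqj : ∀ l : Fin k, q (l.val + 2) = x 0 * y 0 l + x 1 * y 1 l + x 2 * y 2 l) :
    I = (Ideal.span (q '' Set.Iio (k + 2))).radical ∧ araRank I ≤ 2 + k := by
  classical
  subst hI
  set J : Ideal (MvPolynomial (Fin 3 ⊕ Fin 3 × Fin k) K) :=
    Ideal.span (q '' Set.Iio (k + 2)) with hJ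
  set S : Set (MvPolynomial (Fin 3 ⊕ Fin 3 × Fin k) K) :=
    ({x 0 * x 1, x 1 * x 2, x 0 * x 2} ∪
      {p | ∃ (i : Fin 3) (l : Fin k), p = x i * y i l}) with hS
  have hq_mem : ∀ m, m < k + 2 → q m ∈ J :=
    fun m hm => Ideal.subset_span ⟨m, Set.mem_Iio.mpr hm, rfl⟩
  have tri3 : ∀ c : Fin 3, c = 0 ∨ c = 1 ∨ c = 2 := by decide
  -- the three triangle edges are in the radical of J
  have e01 : x 0 * x 1 ∈ J.radical := Ideal.le_radical (hq0 ▸ hq_mem 0 (by omega))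
  have e02 : x 0 * x 2 ∈ J.radical := by
    apply Ideal.mem_radical_of_pow_mem (m := 2)
    apply Ideal.le_radical
    have h : (x 0 * x 2) ^ 2 = (x 0 * x 2) * q 1 - (x 2 * x 2) * q 0 := by
      rw [hq0, hq1]; ring
    rw [h]
    exact Ideal.sub_mem _ (Ideal.mul_mem_left _ _ (hq_mem 1 (by omega)))
      (Ideal.mul_mem_left _ _ (hq_mem 0 (by omega)))
  have e12 : x 1 * x 2 ∈ J.radical := by
    apply Ideal.mem_radical_of_pow_mem (m := 2)
    apply Ideal.le_radical
    have h : (x 1 * x 2) ^ 2 = (x 1 * x 2) * q 1 - (x 2 * x 2) * q 0 := by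
      rw [hq0, hq1]; ring
    rw [h]
    exact Ideal.sub_mem _ (Ideal.mul_mem_left _ _ (hq_mem 1 (by omega)))
      (Ideal.mul_mem_left _ _ (hq_mem 0 (by omega)))
  -- the whisker edges are in the radical of J
  have ew : ∀ (i : Fin 3) (l : Fin k), x i * y i l ∈ J.radical := by
    intro i l
    have hql : q (l.val + 2) ∈ J := hq_mem _ (by omega)
    apply Ideal.mem_radical_of_pow_mem (m := 2)
    rcases tri3 i with rfl | rfl | rfl
    · have h : (x 0 * y 0 l) ^ 2 = (x 0 * y 0 l) * q (l.val + 2)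
          - (y 0 l * y 1 l) * (x 0 * x 1) - (y 0 l * y 2 l) * (x 0 * x 2) := by
        rw [hqj l]; ring
      rw [h]
      exact Ideal.sub_mem _ (Ideal.sub_mem _
        (Ideal.mul_mem_left _ _ (Ideal.le_radical hql)) (Ideal.mul_mem_left _ _ e01))
        (Ideal.mul_mem_left _ _ e02)
    · have h : (x 1 * y 1 l) ^ 2 = (x 1 * y 1 l) * q (l.val + 2)
          - (y 1 l * y 0 l) * (x 0 * x 1) - (y 1 l * y 2 l) * (x 1 * x 2) := by
        rw [hqj l]; ring
      rw [h]
      exact Ideal.sub_mem _ (Ideal.sub_mem _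
        (Ideal.mul_mem_left _ _ (Ideal.le_radical hql)) (Ideal.mul_mem_left _ _ e01))
        (Ideal.mul_mem_left _ _ e12)
    · have h : (x 2 * y 2 l) ^ 2 = (x 2 * y 2 l) * q (l.val + 2)
          - (y 2 l * y 0 l) * (x 0 * x 2) - (y 2 l * y 1 l) * (x 1 * x 2) := by
        rw [hqj l]; ring
      rw [h]
      exact Ideal.sub_mem _ (Ideal.sub_mem _
        (Ideal.mul_mem_left _ _ (Ideal.le_radical hql)) (Ideal.mul_mem_left _ _ e02))
        (Ideal.mul_mem_left _ _ e12)
  -- first inclusion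
  have hle1 : Ideal.span S ≤ J.radical := by
    rw [Ideal.span_le]
    rintro p (hp | ⟨i, l, rfl⟩)
    · simp only [Set.mem_insert_iff, Set.mem_singleton_iff] at hp
      rcases hp with rfl | rfl | rfl
      · exact e01
      · exact e12
      · exact e02
    · exact ew i l
  -- kernel machinery
  have hqcases : ∀ g : (Fin 3 ⊕ Fin 3 × Fin k) → MvPolynomial (Fin 3 ⊕ Fin 3 × Fin k) K,
      aeval g (q 0) = 0 → aeval g (q 1) = 0 →
      (∀ l : Fin k, aeval g (q (l.val + 2)) = 0) → ∀ m, m < k + 2 → aeval g (q m) = 0 := by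
    intro g h0 h1 h2 m hm
    match m, hm with
    | 0, _ => exact h0
    | 1, _ => exact h1
    | (n + 2), hm => exact h2 ⟨n, by omega⟩
  have hXzero : ∀ g : (Fin 3 ⊕ Fin 3 × Fin k) → MvPolynomial (Fin 3 ⊕ Fin 3 × Fin k) K,
      (∀ m, m < k + 2 → aeval g (q m) = 0) → ∀ f ∈ J.radical, aeval g f = 0 := by
    intro g hgq f hf
    have hprime : (RingHom.ker (aeval g : MvPolynomial (Fin 3 ⊕ Fin 3 × Fin k) K →ₐ[K]
        MvPolynomial (Fin 3 ⊕ Fin 3 × Fin k) K)).IsPrime := RingHom.ker_isPrime _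
    have hJk : J ≤ RingHom.ker (aeval g : MvPolynomial (Fin 3 ⊕ Fin 3 × Fin k) K →ₐ[K]
        MvPolynomial (Fin 3 ⊕ Fin 3 × Fin k) K) := by
      rw [hJ, Ideal.span_le]
      rintro p ⟨m, hm, rfl⟩
      exact hgq m (Set.mem_Iio.mp hm)
    have hrad := Ideal.radical_mono hJk
    rw [hprime.radical] at hrad
    exact hrad hf
  -- the four evaluation maps kill J
  have hkA : ∀ f ∈ J.radical, aeval (tmwA k K) f = 0 := by
    apply hXzero
    apply hqcases
    · rw [hq0, hx 0, hx 1]; simp [tmwA]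
    · rw [hq1, hx 0, hx 1, hx 2]; simp [tmwA]
    · intro l
      rw [hqj l, hx 0, hx 1, hx 2, hy 0 l, hy 1 l, hy 2 l]; simp [tmwA]
  have hkC : ∀ c : Fin 3, ∀ f ∈ J.radical, aeval (tmwC k K c) f = 0 := by
    intro c
    apply hXzero
    apply hqcases
    · rw [hq0, hx 0, hx 1]
      rcases tri3 c with rfl | rfl | rfl <;> simp [tmwC]
    · rw [hq1, hx 0, hx 1, hx 2]
      rcases tri3 c with rfl | rfl | rfl <;> simp [tmwC]
    · intro l
      rw [hqj l, hx 0, hx 1, hx 2, hy 0 l, hy 1 l, hy 2 l]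
      simp only [map_add, map_mul, aeval_X, tmwC, Sum.elim_inl, Sum.elim_inr]
      split_ifs <;> simp
  have hozA : ∀ v, tmwA k K v = (X v : MvPolynomial (Fin 3 ⊕ Fin 3 × Fin k) K) ∨
      tmwA k K v = 0 := by
    rintro (a | p)
    · right; rfl
    · left; rfl
  have hozC : ∀ c : Fin 3, ∀ v, tmwC k K c v = (X v : MvPolynomial (Fin 3 ⊕ Fin 3 × Fin k) K) ∨
      tmwC k K c v = 0 := by
    rintro c (a | p)
    · by_cases h : a = c
      · left; simp [tmwC, h]
      · right; simp [tmwC, h]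
    · by_cases h : p.1 = c
      · right; simp [tmwC, h]
      · left; simp [tmwC, h]
  -- the reverse inclusion
  have hle2 : J.radical ≤ Ideal.span S := by
    intro f hf
    rw [← f.support_sum_monomial_coeff]
    apply Ideal.sum_mem
    intro d hd
    obtain ⟨v, hv0, hvd⟩ := tmw_support_hit (tmwA k K) hozA f (hkA f hf) hd
    obtain (i | p) := v
    swap
    · exact absurd hv0 (X_ne_zero _)
    by_cases htri : ∃ a : Fin 3, ¬a = i ∧ d (Sum.inl a) ≠ 0
    · obtain ⟨a, hai, hda⟩ := htri
      refine tmw_monomial_mem _ (Sum.inl a) (Sum.inl i) (by simpa using hai) ?_ d hda hvd _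
      rw [← hx a, ← hx i]
      apply Ideal.subset_span
      rcases tri3 a with rfl | rfl | rfl <;> rcases tri3 i with rfl | rfl | rfl <;>
        first
          | exact absurd rfl hai
          | exact Set.mem_union_left _ (by simp [mul_comm])
    · push_neg at htri
      obtain ⟨w, hw0, hwd⟩ := tmw_support_hit (tmwC k K i) (hozC i) f (hkC i f hf) hd
      obtain (a | ⟨j, l⟩) := w
      · have hai : ¬a = i := by
          intro h
          rw [show tmwC k K i (Sum.inl a) = X (Sum.inl a) by simp [tmwC, h]] at hw0
          exact X_ne_zero _ hw0
        exact absurd (htri a hai) hwd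
      · have hji : j = i := by
          by_contra h
          rw [show tmwC k K i (Sum.inr (j, l)) = X (Sum.inr (j, l)) by simp [tmwC, h]] at hw0
          exact X_ne_zero _ hw0
        subst hji
        refine tmw_monomial_mem _ (Sum.inl j) (Sum.inr (j, l)) (by simp) ?_ d hvd hwd _
        rw [← hx j, ← hy j l]
        exact Ideal.subset_span (Set.mem_union_right _ ⟨j, l, rfl⟩)
  have heq : Ideal.span S = J.radical := le_antisymm hle1 hle2
  refine ⟨heq, ?_⟩
  apply Nat.sInf_le
  refine ⟨fun n : Fin (2 + k) => q n.val, ?_⟩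
  have hr : Set.range (fun n : Fin (2 + k) => q n.val) = q '' Set.Iio (k + 2) := by
    ext b
    constructor
    · rintro ⟨n, rfl⟩
      exact ⟨n.val, Set.mem_Iio.mpr (by omega), rfl⟩
    · rintro ⟨m, hm, rfl⟩
      have hm' : m < k + 2 := Set.mem_Iio.mp hm
      exact ⟨⟨m, by omega⟩, rfl⟩
  rw [hr, ← hJ, heq, Ideal.radical_idem]
end
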